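/- If a sequence of requests r is partitioned into k-phases (maximal consecutive blocks each containing requests to at most k distinct items), and k' ≥ k + 2m where m is the average number of new requests per k-phase (a new request in a phase is one to an item not requested in that phase or the previous phase), then the number of k'-phases is at most (3/4) times the number of k-phases (both counts excluding the first phase). -/

import Mathlib

/-- Length of the maximal prefix of `r` containing at most `k` distinct items. -/
def maxPrefixLen {α : Type*} [DecidableEq α] (k : ℕ) (r : List α) : ℕ :=
  ((List.range (r.length + 1)).filter (fun n => (r.take n).dedup.length ≤ k)).foldr max 0

/-- Greedy phase partition, with fuel for termination. -/
def phasesAux {α : Type*} [DecidableEq α] (k : ℕ) : ℕ → List α → List (List α)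
  | 0, _ => []
  | _, [] => []
  | (fuel+1), r =>
      let n := max 1 (maxPrefixLen k r)
      r.take n :: phasesAux k fuel (r.drop n)

/-- The `k`-phase partition of `r`: greedy maximal consecutive blocks, each
containing requests to at most `k` distinct items. -/
def phases {α : Type*} [DecidableEq α] (k : ℕ) (r : List α) : List (List α) :=
  phasesAux k r.length r

/-- `L(k,r)`: the number of `k`-phases of `r`, minus 1. -/
def numPhases {α : Type*} [DecidableEq α] (k : ℕ) (r : List α) : ℕ :=
  (phases k r).length - 1

/-- For each `k`-phase other than the first, the number of new requests:
items requested in the phase but not in the previous phase. -/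
def newCounts {α : Type*} [DecidableEq α] (k : ℕ) (r : List α) : List ℕ :=
  ((phases k r).zip (phases k r).tail).map
    (fun p => (p.2.dedup.filter (fun x => x ∉ p.1)).length)

/-- `m(k,r)`: the average number of new requests per `k`-phase (other than the first). -/
noncomputable def avgNew {α : Type*} [DecidableEq α] (k : ℕ) (r : List α) : ℝ :=
  ((newCounts k r).sum : ℝ) / (numPhases k r : ℝ)

/-- Index in `r` at which the `i`-th `k`-phase starts. -/
def phaseStart {α : Type*} [DecidableEq α] (k : ℕ) (r : List α) (i : ℕ) : ℕ :=
  (((phases k r).take i).map List.length).sum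

namespace PCD

variable {α : Type*} [DecidableEq α]




lemma foldr_max_mem (l : List ℕ) : ∀ x ∈ l, x ≤ l.foldr max 0 := by
  induction l with
  | nil => simp
  | cons a t ih =>
    intro x hx
    simp only [List.foldr_cons]
    rcases List.mem_cons.mp hx with h | h
    · subst h; exact le_max_left _ _
    · exact le_trans (ih x h) (le_max_right _ _)

lemma foldr_max_cases (l : List ℕ) : l.foldr max 0 = 0 ∨ l.foldr max 0 ∈ l := by
  induction l with
  | nil => simp
  | cons a t ih =>
    simp only [List.foldr_cons]
    rcases le_total a (t.foldr max 0) with h | h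
    · rw [max_eq_right h]
      rcases ih with h' | h'
      · left; exact h'
      · right; exact List.mem_cons_of_mem _ h'
    · rw [max_eq_left h]
      right; exact List.mem_cons_self

lemma le_maxPrefixLen {k n : ℕ} {r : List α} (hn : n ≤ r.length)
    (h : (r.take n).dedup.length ≤ k) : n ≤ maxPrefixLen k r := by
  apply foldr_max_mem
  simp only [List.mem_filter, List.mem_range, decide_eq_true_eq]
  exact ⟨by omega, h⟩

lemma maxPrefixLen_le (k : ℕ) (r : List α) : maxPrefixLen k r ≤ r.length := by
  rcases foldr_max_cases ((List.range (r.length + 1)).filter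
      (fun n => (r.take n).dedup.length ≤ k)) with h | h
  · rw [maxPrefixLen, h]; omega
  · have := List.mem_filter.mp h
    have := List.mem_range.mp this.1
    rw [maxPrefixLen]; omega

lemma maxPrefixLen_spec (k : ℕ) (r : List α) :
    (r.take (maxPrefixLen k r)).dedup.length ≤ k := by
  rcases foldr_max_cases ((List.range (r.length + 1)).filter
      (fun n => (r.take n).dedup.length ≤ k)) with h | h
  · rw [maxPrefixLen, h]; simp
  · have := List.mem_filter.mp h
    have h2 := of_decide_eq_true this.2
    exact h2

lemma maxPrefixLen_pos {k : ℕ} (hk : 1 ≤ k) {r : List α} (hr : r ≠ []) :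
    1 ≤ maxPrefixLen k r := by
  apply le_maxPrefixLen
  · exact List.length_pos_iff.mpr hr
  · match r with
    | a :: t => simpa using hk

lemma maxPrefixLen_maximal {k : ℕ} {r : List α} (h : maxPrefixLen k r < r.length) :
    k < (r.take (maxPrefixLen k r + 1)).dedup.length := by
  by_contra hc
  push_neg at hc
  have := le_maxPrefixLen (by omega) hc
  omega







lemma phasesAux_nil (k fuel : ℕ) : phasesAux k fuel ([] : List α) = [] := by
  cases fuel <;> rfl

lemma phasesAux_cons (k fuel : ℕ) (s : List α) (hs : s ≠ []) :
    phasesAux k (fuel+1) s = s.take (max 1 (maxPrefixLen k s)) ::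
      phasesAux k fuel (s.drop (max 1 (maxPrefixLen k s))) := by
  cases s with
  | nil => exact absurd rfl hs
  | cons a t => rfl

lemma phasesAux_ne_nil_inv {k fuel : ℕ} {s : List α}
    (h : phasesAux k fuel s ≠ []) : s ≠ [] ∧ 0 < fuel := by
  constructor
  · intro hs; rw [hs, phasesAux_nil] at h; exact h rfl
  · cases fuel with
    | zero => simp [phasesAux] at h
    | succ f => omega

lemma phasesAux_join (k : ℕ) : ∀ (fuel : ℕ) (r : List α), r.length ≤ fuel →
    (phasesAux k fuel r).flatten = r := by
  intro fuel
  induction fuel with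
  | zero =>
    intro r h
    have : r = [] := List.length_eq_zero_iff.mp (by omega)
    subst this; rfl
  | succ fuel ih =>
    intro r h
    rcases eq_or_ne r [] with hr | hr
    · subst hr; rfl
    · rw [phasesAux_cons k fuel r hr, List.flatten_cons, ih, List.take_append_drop]
      have h1 : 1 ≤ max 1 (maxPrefixLen k r) := le_max_left _ _
      simp only [List.length_drop]
      omega

lemma phasesAux_ne_nil (k : ℕ) : ∀ (fuel : ℕ) (r : List α),
    ∀ p ∈ phasesAux k fuel r, p ≠ [] := by
  intro fuel
  induction fuel with
  | zero => simp [phasesAux]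
  | succ fuel ih =>
    intro r p hp
    rcases eq_or_ne r [] with hr | hr
    · subst hr; rw [phasesAux_nil] at hp; simp at hp
    · rw [phasesAux_cons k fuel r hr] at hp
      rcases List.mem_cons.mp hp with h | h
      · subst h
        have h1 : 1 ≤ max 1 (maxPrefixLen k r) := le_max_left _ _
        have h2 : 0 < r.length := List.length_pos_iff.mpr hr
        intro hnil
        have := congrArg List.length hnil
        simp only [List.length_take, List.length_nil] at this
        omega
      · exact ih _ p h

lemma phasesAux_dedup_le {k : ℕ} (hk : 1 ≤ k) : ∀ (fuel : ℕ) (r : List α),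
    ∀ p ∈ phasesAux k fuel r, p.dedup.length ≤ k := by
  intro fuel
  induction fuel with
  | zero => simp [phasesAux]
  | succ fuel ih =>
    intro r p hp
    rcases eq_or_ne r [] with hr | hr
    · subst hr; rw [phasesAux_nil] at hp; simp at hp
    · rw [phasesAux_cons k fuel r hr] at hp
      rcases List.mem_cons.mp hp with h | h
      · subst h
        rw [max_eq_right (maxPrefixLen_pos hk hr)]
        exact maxPrefixLen_spec k _
      · exact ih _ p h

lemma phasesAux_maximal {k : ℕ} (hk : 1 ≤ k) : ∀ (fuel : ℕ) (r : List α),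
    ∀ pq ∈ (phasesAux k fuel r).zip (phasesAux k fuel r).tail,
      k < (pq.1 ++ pq.2.take 1).dedup.length := by
  intro fuel
  induction fuel with
  | zero => simp [phasesAux]
  | succ fuel ih =>
    intro r pq hpq
    rcases eq_or_ne r [] with hr | hr
    · subst hr; rw [phasesAux_nil] at hpq; simp at hpq
    · rw [phasesAux_cons k fuel r hr] at hpq
      simp only [List.tail_cons] at hpq
      cases hQ : phasesAux k fuel (r.drop (max 1 (maxPrefixLen k r))) with
      | nil => rw [hQ] at hpq; simp at hpq
      | cons q0 Q' =>
        rw [hQ, List.zip_cons_cons] at hpq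
        rcases List.mem_cons.mp hpq with h | h
        · subst h
          have hinv := phasesAux_ne_nil_inv (k := k) (fuel := fuel)
            (s := r.drop (max 1 (maxPrefixLen k r))) (by rw [hQ]; simp)
          obtain ⟨hdne, hfpos⟩ := hinv
          obtain ⟨f', rfl⟩ : ∃ f', fuel = f' + 1 := ⟨fuel - 1, by omega⟩
          rw [phasesAux_cons k f' _ hdne] at hQ
          injection hQ with hq0' _
          have hq0 : q0 = (r.drop (max 1 (maxPrefixLen k r))).take
              (max 1 (maxPrefixLen k (r.drop (max 1 (maxPrefixLen k r))))) := hq0'.symm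
          have hq0take : q0.take 1 = (r.drop (max 1 (maxPrefixLen k r))).take 1 := by
            rw [hq0, List.take_take, Nat.min_eq_left (le_max_left _ _)]
          have hmp : max 1 (maxPrefixLen k r) = maxPrefixLen k r :=
            max_eq_right (maxPrefixLen_pos hk hr)
          have hlt : maxPrefixLen k r < r.length := by
            have : 0 < (r.drop (max 1 (maxPrefixLen k r))).length := List.length_pos_iff.mpr hdne
            simp only [List.length_drop] at this
            omega
          show k < (r.take (max 1 (maxPrefixLen k r)) ++ q0.take 1).dedup.length
          rw [hq0take, ← List.take_add, hmp]
          exact maxPrefixLen_maximal hlt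
        · refine ih (r.drop (max 1 (maxPrefixLen k r))) pq ?_
          rw [hQ]
          exact h




lemma flatten_drop_sum : ∀ (P : List (List α)) (i : ℕ),
    P.flatten.drop (((P.take i).map List.length).sum) = (P.drop i).flatten := by
  intro P
  induction P with
  | nil => intro i; simp
  | cons p P ih =>
    intro i
    cases i with
    | zero => simp
    | succ i =>
      simp only [List.take_succ_cons, List.map_cons, List.sum_cons, List.flatten_cons,
        List.drop_succ_cons]
      rw [add_comm, List.drop_append]
      have : p.length ≤ ((P.take i).map List.length).sum + p.length := by omega
      rw [List.drop_eq_nil_of_le (by simpa using this)]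
      simp only [List.nil_append]
      rw [Nat.add_sub_cancel]
      exact ih i

lemma flatten_seg_eq : ∀ (P : List (List α)) (i : ℕ) (h : i < P.length),
    (P.flatten.take (((P.take (i+1)).map List.length).sum)).drop
      (((P.take i).map List.length).sum) = P[i] := by
  intro P
  induction P with
  | nil => intro i h; simp at h
  | cons p P ih =>
    intro i h
    cases i with
    | zero =>
      simp only [List.take_succ_cons, List.take_zero, List.map_cons, List.map_nil,
        List.sum_cons, List.sum_nil, List.flatten_cons, List.drop_zero, add_zero,
        List.getElem_cons_zero]
      rw [List.take_left]
    | succ i =>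
      simp only [List.take_succ_cons, List.map_cons, List.sum_cons, List.flatten_cons,
        List.getElem_cons_succ]
      rw [add_comm p.length (((P.take (i+1)).map List.length).sum)]
      rw [List.take_append]
      rw [List.take_of_length_le (by simp : p.length ≤ _ + p.length)]
      rw [Nat.add_sub_cancel]
      rw [add_comm p.length (((P.take i).map List.length).sum), List.drop_append]
      rw [List.drop_eq_nil_of_le (by simp : p.length ≤ _ + p.length)]
      rw [Nat.add_sub_cancel]
      simp only [List.nil_append]
      exact ih i (by simpa using h)

lemma seg_append (r : List α) (x y z : ℕ) (hxy : x ≤ y) (hyz : y ≤ z) (hy : y ≤ r.length) :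
    (r.take z).drop x = (r.take y).drop x ++ (r.take z).drop y := by
  have h1 : r.take z = r.take y ++ (r.drop y).take (z - y) := by
    rw [← List.take_add]
    congr 1
    omega
  rw [h1, List.drop_append]
  have h2 : (r.take y).length = y := by simp; omega
  rw [h2]
  have h3 : x - y = 0 := by omega
  rw [h3, List.drop_zero]
  congr 1
  rw [List.drop_append, List.drop_eq_nil_of_le (le_of_eq h2), h2,
    Nat.sub_self, List.drop_zero, List.nil_append]

lemma seg_sublist (r : List α) (x y x' y' : ℕ) (hx : x' ≤ x) (hy : y ≤ y') :
    ((r.take y).drop x).Sublist ((r.take y').drop x') := by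
  have h1 : r.take y = (r.take y').take y := by rw [List.take_take, Nat.min_eq_left hy]
  rw [h1, List.drop_take]
  have h2 : (r.take y').drop x = ((r.take y').drop x').drop (x - x') := by
    rw [List.drop_drop]
    congr 1
    omega
  rw [h2]
  exact (List.take_sublist _ _).trans (List.drop_sublist _ _)




section PhaseFacts

variable (k : ℕ) (r : List α)

lemma phases_flatten : (phases k r).flatten = r :=
  phasesAux_join k r.length r le_rfl

lemma phaseStart_zero : phaseStart k r 0 = 0 := by simp [phaseStart]

lemma phaseStart_top {i : ℕ} (h : (phases k r).length ≤ i) : phaseStart k r i = r.length := by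
  rw [phaseStart, List.take_of_length_le h, ← List.length_flatten, phases_flatten]

lemma phaseStart_succ {i : ℕ} (h : i < (phases k r).length) :
    phaseStart k r (i+1) = phaseStart k r i + ((phases k r)[i]).length := by
  rw [phaseStart, phaseStart, List.take_succ, List.getElem?_eq_getElem h]
  simp only [List.map_append, List.sum_append, Option.toList_some, List.map_cons, List.map_nil,
    List.sum_cons, List.sum_nil, ← List.map_take]
  omega

lemma phase_ne_nil {p : List α} (hp : p ∈ phases k r) : p ≠ [] :=
  phasesAux_ne_nil k r.length r p hp

lemma phaseStart_mono {i j : ℕ} (h : i ≤ j) : phaseStart k r i ≤ phaseStart k r j := by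
  rw [phaseStart, phaseStart]
  have : (phases k r).take j = (phases k r).take i ++ ((phases k r).drop i).take (j - i) := by
    rw [← List.take_add]
    congr 1
    omega
  rw [this]
  simp

lemma phaseStart_lt {i : ℕ} (h : i < (phases k r).length) :
    phaseStart k r i < phaseStart k r (i+1) := by
  rw [phaseStart_succ k r h]
  have := phase_ne_nil k r (List.getElem_mem h)
  have : 0 < ((phases k r)[i]).length := List.length_pos_iff.mpr this
  omega

lemma phaseStart_le_length (i : ℕ) : phaseStart k r i ≤ r.length := by
  rcases le_or_gt (phases k r).length i with h | h
  · exact le_of_eq (phaseStart_top k r h)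
  · calc phaseStart k r i ≤ phaseStart k r (phases k r).length :=
        phaseStart_mono k r (le_of_lt h)
    _ = r.length := phaseStart_top k r le_rfl

lemma phaseStart_lt_length {i : ℕ} (h : i < (phases k r).length) :
    phaseStart k r i < r.length := by
  calc phaseStart k r i < phaseStart k r (i+1) := phaseStart_lt k r h
  _ ≤ r.length := phaseStart_le_length k r _

lemma lt_length_of_phaseStart_lt {m : ℕ} (h : phaseStart k r m < r.length) :
    m < (phases k r).length := by
  by_contra hc
  push_neg at hc
  rw [phaseStart_top k r hc] at h
  omega

lemma seg_phase {i : ℕ} (h : i < (phases k r).length) :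
    (r.take (phaseStart k r (i+1))).drop (phaseStart k r i) = (phases k r)[i] := by
  have := flatten_seg_eq (phases k r) i h
  rwa [phases_flatten] at this

lemma sublist_toFinset_card_le {s t : List α} (h : s.Sublist t) :
    s.toFinset.card ≤ t.toFinset.card := by
  apply Finset.card_le_card
  intro x hx
  rw [List.mem_toFinset] at *
  exact h.subset hx

lemma phase_card_le (hk : 1 ≤ k) {i : ℕ} (h : i < (phases k r).length) :
    ((phases k r)[i]).toFinset.card ≤ k := by
  rw [List.card_toFinset]
  exact phasesAux_dedup_le hk r.length r _ (List.getElem_mem h)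

lemma seg_card_le (hk : 1 ≤ k) {i x y : ℕ} (h : i < (phases k r).length)
    (hx : phaseStart k r i ≤ x) (hy : y ≤ phaseStart k r (i+1)) :
    ((r.take y).drop x).toFinset.card ≤ k := by
  calc ((r.take y).drop x).toFinset.card
      ≤ ((r.take (phaseStart k r (i+1))).drop (phaseStart k r i)).toFinset.card :=
        sublist_toFinset_card_le (seg_sublist r x y _ _ hx hy)
    _ = ((phases k r)[i]).toFinset.card := by rw [seg_phase k r h]
    _ ≤ k := phase_card_le k r hk h

lemma take_one_append {p q : List α} (hp : p ≠ []) : (p ++ q).take 1 = p.take 1 := by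
  cases p with
  | nil => exact absurd rfl hp
  | cons a t => simp

lemma seg_maximal (hk : 1 ≤ k) {i : ℕ} (h : i + 1 < (phases k r).length) :
    k < ((r.take (phaseStart k r (i+1) + 1)).drop (phaseStart k r i)).toFinset.card := by
  have hi : i < (phases k r).length := by omega
  have hBle : phaseStart k r (i+1) ≤ r.length := phaseStart_le_length k r _
  have hsplit := seg_append r (phaseStart k r i) (phaseStart k r (i+1))
    (phaseStart k r (i+1) + 1) (le_of_lt (phaseStart_lt k r hi)) (by omega) hBle
  have htail : (r.take (phaseStart k r (i+1) + 1)).drop (phaseStart k r (i+1))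
      = ((phases k r)[i+1]).take 1 := by
    rw [List.drop_take]
    have h1 : phaseStart k r (i+1) + 1 - phaseStart k r (i+1) = 1 := by omega
    rw [h1]
    have h2 : r.drop (phaseStart k r (i+1)) = ((phases k r).drop (i+1)).flatten := by
      have := flatten_drop_sum (phases k r) (i+1)
      rwa [phases_flatten] at this
    rw [h2, List.drop_eq_getElem_cons h, List.flatten_cons]
    exact take_one_append (phase_ne_nil k r (List.getElem_mem h))
  rw [hsplit, seg_phase k r hi, htail]
  have hmem : ((phases k r)[i], (phases k r)[i+1]) ∈ (phases k r).zip (phases k r).tail := by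
    have hlen : i < ((phases k r).zip (phases k r).tail).length := by
      simp only [List.length_zip, List.length_tail]
      omega
    have := List.getElem_mem hlen
    rwa [List.getElem_zip, List.getElem_tail] at this
  have := phasesAux_maximal hk r.length r _ hmem
  rwa [← List.card_toFinset] at this

lemma newCounts_length : (newCounts k r).length = (phases k r).length - 1 := by
  simp [newCounts]

lemma seg_pair (hk : 1 ≤ k) {i : ℕ} (h : i + 1 < (phases k r).length) :
    ((r.take (phaseStart k r (i+2))).drop (phaseStart k r i)).toFinset.card
      ≤ k + (newCounts k r).getD i 0 := by
  have hi : i < (phases k r).length := by omega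
  have hsplit := seg_append r (phaseStart k r i) (phaseStart k r (i+1))
    (phaseStart k r (i+2)) (le_of_lt (phaseStart_lt k r hi))
    (phaseStart_mono k r (by omega)) (phaseStart_le_length k r _)
  rw [hsplit, seg_phase k r hi]
  have h2 : (r.take (phaseStart k r (i+2))).drop (phaseStart k r (i+1))
      = (phases k r)[i+1] := seg_phase k r h
  rw [h2, List.toFinset_append]
  set X := ((phases k r)[i]).toFinset
  set Y := ((phases k r)[i+1]).toFinset
  have hcard : (X ∪ Y).card ≤ X.card + (Y \ X).card := by
    rw [← Finset.union_sdiff_self_eq_union]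
    exact Finset.card_union_le _ _
  have hnc : (newCounts k r).getD i 0 = (Y \ X).card := by
    have hilen : i < ((phases k r).zip (phases k r).tail).length := by
      simp only [List.length_zip, List.length_tail]; omega
    have hlen' : i < (newCounts k r).length := by rw [newCounts_length]; omega
    rw [List.getD_eq_getElem _ _ hlen']
    have : (newCounts k r)[i] = (fun p : List α × List α =>
        (p.2.dedup.filter (fun x => x ∉ p.1)).length)
          (((phases k r).zip (phases k r).tail)[i]) := by
      simp [newCounts]
    rw [this, List.getElem_zip, List.getElem_tail]
    simp only
    have hnodup : ((phases k r)[i+1]).dedup.Nodup := List.nodup_dedup _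
    rw [← List.toFinset_card_of_nodup (hnodup.filter _)]
    congr 1
    rw [List.toFinset_filter]
    ext x
    simp only [Finset.mem_filter, Finset.mem_sdiff, List.mem_toFinset,
      decide_not, Bool.not_eq_true', decide_eq_false_iff_not, Y, X, List.mem_dedup]
  rw [hnc]
  exact le_trans hcard (Nat.add_le_add_right (phase_card_le k r hk hi) _)

lemma sum_getD (l : List ℕ) : l.sum = ∑ i ∈ Finset.range l.length, l.getD i 0 := by
  induction l with
  | nil => simp
  | cons a t ih =>
    rw [List.sum_cons, List.length_cons, Finset.sum_range_succ']
    simp only [List.getD_cons_succ, List.getD_cons_zero]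
    rw [ih]
    omega

end PhaseFacts

end PCD

theorem abstract_count
    (L L' k k' S : ℕ) (ψ : ℕ → ℕ) (A : ℕ → Prop) [DecidablePred A] (nc : ℕ → ℕ)
    (hψ0 : ψ 0 = 0)
    (hψL' : ψ L' ≤ L)
    (hstep1 : ∀ j, j < L' → ψ j + 1 ≤ ψ (j+1))
    (hstep2 : ∀ j, j < L' → ¬ A j → ψ j + 2 ≤ ψ (j+1))
    (hchargeIdx : ∀ j, j < L' → A j → ψ j < L)
    (hcharge : ∀ j, j < L' → A j → k' + 1 ≤ k + nc (ψ j))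
    (hkk' : k ≤ k')
    (hSsum : ∑ i ∈ Finset.range L, nc i ≤ S)
    (hL1 : 1 ≤ L)
    (hreal : (k:ℝ) + 2 * ((S:ℝ)/(L:ℝ)) ≤ (k':ℝ)) :
    (L' : ℝ) ≤ 3/4 * (L:ℝ) := by
  classical
  set Afin := (Finset.range L').filter A with hAfin
  set a := Afin.card with ha
  set bfin := (Finset.range L').filter (fun j => ¬ A j) with hbfin
  set b := bfin.card with hb
  have hab : a + b = L' := by
    rw [ha, hb, hAfin, hbfin, Finset.card_filter_add_card_filter_not]
    simp
  have hψmono : ∀ d j, j + d ≤ L' → ψ j + d ≤ ψ (j + d) := by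
    intro d
    induction d with
    | zero => intro j _; simp
    | succ d ih =>
      intro j hjd
      have h1 := ih j (by omega)
      have h2 := hstep1 (j + d) (by omega)
      have h3 : j + (d+1) = (j + d) + 1 := by omega
      rw [h3]
      omega
  have htel : ∀ n, n ≤ L' → ∑ j ∈ Finset.range n, (ψ (j+1) - ψ j) = ψ n := by
    intro n
    induction n with
    | zero => intro _; simp [hψ0]
    | succ n ih =>
      intro hn
      rw [Finset.sum_range_succ, ih (by omega)]
      have := hstep1 n (by omega)
      omega
  have hsum_lb : ∀ j ∈ Finset.range L', (if A j then 1 else 2) ≤ ψ (j+1) - ψ j := by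
    intro j hj
    rw [Finset.mem_range] at hj
    split_ifs with hAj
    · have := hstep1 j hj
      omega
    · have := hstep2 j hj hAj
      omega
  have hcount : a + 2 * b ≤ L := by
    have h1 : ∑ j ∈ Finset.range L', (if A j then 1 else 2) ≤ ψ L' :=
      (htel L' le_rfl) ▸ Finset.sum_le_sum hsum_lb
    have h2 : ∑ j ∈ Finset.range L', (if A j then 1 else 2) = a * 1 + b * 2 := by
      rw [← Finset.sum_filter_add_sum_filter_not (Finset.range L') A]
      congr 1
      · rw [Finset.sum_congr rfl (fun j hj => if_pos (Finset.mem_filter.mp hj).2)]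
        simp [ha, hAfin, mul_comm]
      · rw [Finset.sum_congr rfl (fun j hj => if_neg (Finset.mem_filter.mp hj).2)]
        simp [hb, hbfin, mul_comm]
    omega
  have hinj : Set.InjOn ψ Afin := by
    intro j1 hj1 j2 hj2 heq
    simp only [hAfin, Finset.coe_filter, Set.mem_setOf_eq, Finset.mem_range] at hj1 hj2
    by_contra hne
    rcases Nat.lt_or_ge j1 j2 with hlt | hge
    · have h1 := hψmono (j2 - j1) j1 (by omega)
      have h2 : j1 + (j2 - j1) = j2 := by omega
      rw [h2] at h1
      omega
    · have hlt : j2 < j1 := by omega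
      have h1 := hψmono (j1 - j2) j2 (by omega)
      have h2 : j2 + (j1 - j2) = j1 := by omega
      rw [h2] at h1
      omega
  have himg : Finset.image ψ Afin ⊆ Finset.range L := by
    intro i hi
    rw [Finset.mem_image] at hi
    obtain ⟨j, hj, rfl⟩ := hi
    rw [hAfin, Finset.mem_filter, Finset.mem_range] at hj
    have := hchargeIdx j hj.1 hj.2
    rw [Finset.mem_range]
    omega
  have hScharge : a * (k' + 1 - k) ≤ S := by
    have hcard : (Finset.image ψ Afin).card = a := Finset.card_image_of_injOn hinj
    have h1 : (Finset.image ψ Afin).card * (k' + 1 - k) ≤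
        ∑ i ∈ Finset.image ψ Afin, nc i := by
      apply Finset.card_nsmul_le_sum
      intro i hi
      rw [Finset.mem_image] at hi
      obtain ⟨j, hj, rfl⟩ := hi
      rw [hAfin, Finset.mem_filter, Finset.mem_range] at hj
      have := hcharge j hj.1 hj.2
      omega
    have h2 : ∑ i ∈ Finset.image ψ Afin, nc i ≤ ∑ i ∈ Finset.range L, nc i :=
      Finset.sum_le_sum_of_subset himg
    rw [hcard] at h1
    omega
  -- real arithmetic
  have hLR : (1:ℝ) ≤ (L:ℝ) := by exact_mod_cast hL1
  have hdiv : 2 * (S:ℝ) ≤ ((k':ℝ) - k) * L := by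
    have h1 : 2 * ((S:ℝ) / L) ≤ (k':ℝ) - k := by linarith
    have h2 : 2 * ((S:ℝ) / L) * L ≤ ((k':ℝ) - k) * L :=
      mul_le_mul_of_nonneg_right h1 (by linarith)
    rw [mul_assoc, div_mul_cancel₀ _ (by linarith : (L:ℝ) ≠ 0)] at h2
    linarith
  have hSchR : (a:ℝ) * ((k':ℝ) + 1 - k) ≤ (S:ℝ) := by
    have hcast : ((a * (k' + 1 - k) : ℕ) : ℝ) ≤ ((S:ℕ):ℝ) := by exact_mod_cast hScharge
    rwa [Nat.cast_mul, Nat.cast_sub (by omega : k ≤ k' + 1), Nat.cast_add, Nat.cast_one] at hcast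
  have hcountR : (a:ℝ) + 2 * b ≤ (L:ℝ) := by exact_mod_cast hcount
  have habR : (a:ℝ) + b = (L':ℝ) := by exact_mod_cast hab
  have haR : (0:ℝ) ≤ a := Nat.cast_nonneg _
  have hSR : (0:ℝ) ≤ S := Nat.cast_nonneg _
  have hkey : 2 * (a:ℝ) * S + a * L ≤ S * L := by
    have h1 : (a:ℝ) * (2 * S) ≤ a * (((k':ℝ) - k) * L) :=
      mul_le_mul_of_nonneg_left hdiv haR
    have h2 : ((a:ℝ) * ((k':ℝ) + 1 - k)) * L ≤ S * L :=
      mul_le_mul_of_nonneg_right hSchR (by linarith)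
    nlinarith
  have h2a : 2 * (a:ℝ) ≤ L := by
    rcases eq_or_lt_of_le haR with h0 | hpos
    · linarith
    · by_contra hcon
      push_neg at hcon
      have h1 : (S:ℝ) * ((L:ℝ) - 2 * a) ≤ 0 :=
        mul_nonpos_of_nonneg_of_nonpos hSR (by linarith)
      nlinarith
  linarith

/-- if `k' ≥ k + 2·m(k,r)` then the number of `k'`-phases (minus 1)
is at most `3/4` times the number of `k`-phases (minus 1). -/
theorem phase_count_drop {α : Type*} [DecidableEq α] (r : List α) (k k' : ℕ)
    (hk : 0 < k) (hk' : (k : ℝ) + 2 * avgNew k r ≤ (k' : ℝ)) :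
    (numPhases k' r : ℝ) ≤ (3 / 4) * (numPhases k r : ℝ) := by
  classical
  rcases le_or_gt (phases k' r).length 1 with hN'1 | hN'1
  · have h0 : numPhases k' r = 0 := by rw [numPhases]; omega
    rw [h0]
    have h1 : (0:ℝ) ≤ (numPhases k r : ℝ) := Nat.cast_nonneg _
    push_cast
    linarith
  · have hk1 : 1 ≤ k := hk
    have hS0 : (0:ℝ) ≤ ((newCounts k r).sum : ℝ) := Nat.cast_nonneg _
    have hkk' : k ≤ k' := by
      have havg : 0 ≤ avgNew k r := div_nonneg hS0 (Nat.cast_nonneg _)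
      have : (k:ℝ) ≤ (k':ℝ) := by linarith
      exact_mod_cast this
    have hk'1 : 1 ≤ k' := le_trans hk1 hkk'
    have hN2 : 2 ≤ (phases k r).length := by
      by_contra hc
      push_neg at hc
      rcases (by omega : (phases k r).length = 0 ∨ (phases k r).length = 1) with h0 | h1
      · have hr : r = [] := by
          have hfl := PCD.phases_flatten k r
          rw [List.length_eq_zero_iff.mp h0] at hfl
          exact hfl.symm
        have : (phases k' r).length = 0 := by
          rw [hr, phases]
          simp [PCD.phasesAux_nil]
        omega
      · obtain ⟨p, hp⟩ := List.length_eq_one_iff.mp h1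
        have hpr : p = r := by
          have hfl := PCD.phases_flatten k r
          rw [hp] at hfl
          simpa using hfl
        have hpmem : p ∈ phases k r := by rw [hp]; exact List.mem_cons_self
        have hd : r.dedup.length ≤ k := by
          have := PCD.phasesAux_dedup_le hk1 r.length r p hpmem
          rwa [hpr] at this
        have hmax := PCD.seg_maximal k' r hk'1 (show 0 + 1 < (phases k' r).length by omega)
        have hsub : ((r.take (phaseStart k' r (0+1) + 1)).drop (phaseStart k' r 0)).Sublist r :=
          (List.drop_sublist _ _).trans (List.take_sublist _ _)
        have hcard := PCD.sublist_toFinset_card_le hsub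
        simp only [List.card_toFinset] at hcard hmax
        omega
    -- main case
    obtain ⟨ψ, hψeq⟩ : ∃ ψ : ℕ → ℕ, ∀ j, ψ j =
        Nat.findGreatest (fun i => phaseStart k r i ≤ phaseStart k' r j)
          (phases k r).length := ⟨_, fun _ => rfl⟩
    have hψ_spec : ∀ j, phaseStart k r (ψ j) ≤ phaseStart k' r j := by
      intro j
      rw [hψeq j]
      exact Nat.findGreatest_spec (P := fun i => phaseStart k r i ≤ phaseStart k' r j)
        (Nat.zero_le _)
        (show phaseStart k r 0 ≤ phaseStart k' r j by
          rw [PCD.phaseStart_zero]; exact Nat.zero_le _)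
    have hCltlen : ∀ j, j < (phases k' r).length → phaseStart k' r j < r.length :=
      fun j hj => PCD.phaseStart_lt_length k' r hj
    have hψ_lt : ∀ j, j < (phases k' r).length → ψ j < (phases k r).length := by
      intro j hj
      exact PCD.lt_length_of_phaseStart_lt k r (lt_of_le_of_lt (hψ_spec j) (hCltlen j hj))
    have hstep : ∀ j, j + 1 < (phases k' r).length →
        phaseStart k r (ψ j + 1) ≤ phaseStart k' r (j+1) := by
      intro j hj
      by_contra hcon
      push_neg at hcon
      have hmax := PCD.seg_maximal k' r hk'1 hj
      have hle := PCD.seg_card_le k r hk1 (hψ_lt j (by omega)) (hψ_spec j)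
        (show phaseStart k' r (j+1) + 1 ≤ phaseStart k r (ψ j + 1) by omega)
      omega
    have hψlt' : ∀ j, j + 1 < (phases k' r).length → ψ j + 1 < (phases k r).length := by
      intro j hj
      exact PCD.lt_length_of_phaseStart_lt k r
        (lt_of_le_of_lt (hstep j hj) (hCltlen (j+1) hj))
    have hstep1 : ∀ j, j + 1 < (phases k' r).length → ψ j + 1 ≤ ψ (j+1) := by
      intro j hj
      rw [hψeq (j+1)]
      exact Nat.le_findGreatest (by have := hψlt' j hj; omega) (hstep j hj)
    obtain ⟨A, hAeq⟩ : ∃ A : ℕ → Prop, ∀ j, A j =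
        (phaseStart k' r (j+1) + 1 ≤ phaseStart k r (ψ j + 2)) := ⟨_, fun _ => rfl⟩
    have hstep2 : ∀ j, j + 1 < (phases k' r).length → ¬ A j → ψ j + 2 ≤ ψ (j+1) := by
      intro j hj hnA
      rw [hAeq j] at hnA
      push_neg at hnA
      have hBle : phaseStart k r (ψ j + 2) ≤ phaseStart k' r (j+1) := by omega
      have h2N : ψ j + 2 ≤ (phases k r).length := by
        have := PCD.lt_length_of_phaseStart_lt k r
          (lt_of_le_of_lt hBle (hCltlen (j+1) hj))
        omega
      rw [hψeq (j+1)]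
      exact Nat.le_findGreatest h2N hBle
    have hcharge : ∀ j, j + 1 < (phases k' r).length → A j →
        k' + 1 ≤ k + (newCounts k r).getD (ψ j) 0 := by
      intro j hj hAj
      rw [hAeq j] at hAj
      have hmax := PCD.seg_maximal k' r hk'1 hj
      have hsub := PCD.seg_sublist r (phaseStart k' r j) (phaseStart k' r (j+1) + 1)
        (phaseStart k r (ψ j)) (phaseStart k r (ψ j + 2)) (hψ_spec j) hAj
      have hpair := PCD.seg_pair k r hk1 (hψlt' j hj)
      have := PCD.sublist_toFinset_card_le hsub
      omega
    have hψ0 : ψ 0 = 0 := by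
      by_contra hcon
      have h1 : 1 ≤ ψ 0 := by omega
      have h2 : phaseStart k r 1 ≤ phaseStart k r (ψ 0) := PCD.phaseStart_mono k r h1
      have h3 : phaseStart k r (ψ 0) ≤ phaseStart k' r 0 := hψ_spec 0
      have h4 : phaseStart k r 0 < phaseStart k r 1 := PCD.phaseStart_lt k r (by omega)
      rw [PCD.phaseStart_zero] at h4
      have h5 : phaseStart k' r 0 = 0 := PCD.phaseStart_zero k' r
      omega
    -- instantiate the abstract counting lemma
    have habs := abstract_count ((phases k r).length - 1) ((phases k' r).length - 1) k k'
      ((newCounts k r).sum) ψ A (fun i => (newCounts k r).getD i 0)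
      hψ0
      (by have := hψ_lt ((phases k' r).length - 1) (by omega); omega)
      (fun j hj => hstep1 j (by omega))
      (fun j hj hnA => hstep2 j (by omega) hnA)
      (fun j hj hAj => by have := hψlt' j (by omega); omega)
      (fun j hj hAj => hcharge j (by omega) hAj)
      hkk'
      (le_of_eq (by rw [← PCD.newCounts_length k r]; exact (PCD.sum_getD _).symm))
      (by omega)
      (by
        have havg : avgNew k r
            = ((newCounts k r).sum : ℝ) / (((phases k r).length - 1 : ℕ) : ℝ) := rfl
        rw [havg] at hk'
        exact hk')
    have hnum' : numPhases k' r = (phases k' r).length - 1 := rfl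
    have hnum : numPhases k r = (phases k r).length - 1 := rfl
    rw [hnum, hnum']
    exact habs
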